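/- Let Q be a left quasigroup connected by Dis(Q) (i.e. Dis(Q) acts transitively), let α be a central congruence of Q, and let β = O_{Dis_α}. Then for every x ∈ Q: Dis(Q)_{[x]_β} ≅ Dis_α × Dis(Q)_x and Dis^β ≅ Dis_α × Dis^β_x; moreover Dis^β embeds into a direct power of Dis_α and hence is abelian. -/

import Mathlib

/-! Basic theory of left quasigroups, following the paper. -/

structure LeftQuasigroup (Q : Type*) where
  op : Q → Q → Q
  ld : Q → Q → Q
  op_ld : ∀ x y, op x (ld x y) = y
  ld_op : ∀ x y, ld x (op x y) = y

/-- Orbit relation of a subgroup of permutations. -/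
def orbRel {Q : Type*} (N : Subgroup (Equiv.Perm Q)) (x y : Q) : Prop := ∃ h ∈ N, h y = x

/-- Orbit equivalence relation of a subgroup of permutations. -/
def orbSetoid {Q : Type*} (N : Subgroup (Equiv.Perm Q)) : Setoid Q where
  r := orbRel N
  iseqv := by
    constructor
    · exact fun x => ⟨1, N.one_mem, rfl⟩
    · rintro x y ⟨h, hN, rfl⟩
      exact ⟨h⁻¹, N.inv_mem hN, h.symm_apply_apply y⟩
    · rintro x y z ⟨h, hN, rfl⟩ ⟨g, gN, rfl⟩
      exact ⟨h * g, N.mul_mem hN gN, rfl⟩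

/-- The subgroup of permutations moving every point inside its `α`-class. -/
def kerRel {Q : Type*} (α : Setoid Q) : Subgroup (Equiv.Perm Q) where
  carrier := {g | ∀ x, α.r (g x) x}
  one_mem' := fun x => α.refl x
  mul_mem' := by
    intro a b ha hb x
    exact α.trans (ha (b x)) (hb x)
  inv_mem' := by
    intro a ha x
    have := ha (a⁻¹ x)
    rw [show a (a⁻¹ x) = x from a.apply_symm_apply x] at this
    exact α.symm this

/-- Pointwise stabilizer of `x` in `N`. -/
def pstab {Q : Type*} (N : Subgroup (Equiv.Perm Q)) (x : Q) : Subgroup (Equiv.Perm Q) :=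
  N ⊓ MulAction.stabilizer (Equiv.Perm Q) x

/-- Meet of a family of setoids. -/
def infSetoid {Q I : Type*} (α : I → Setoid Q) : Setoid Q where
  r x y := ∀ i, (α i).r x y
  iseqv := ⟨fun x i => (α i).refl x, fun h i => (α i).symm (h i),
    fun h g i => (α i).trans (h i) (g i)⟩

namespace LeftQuasigroup

variable {Q : Type*} (S : LeftQuasigroup Q)

/-- Left translation as a permutation. -/
def L (x : Q) : Equiv.Perm Q := ⟨S.op x, S.ld x, S.ld_op x, S.op_ld x⟩

/-- The left multiplication group. -/
def LMlt : Subgroup (Equiv.Perm Q) := Subgroup.closure (Set.range S.L)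

/-- The displacement group relative to a binary relation `r`. -/
def disRel (r : Q → Q → Prop) : Subgroup (Equiv.Perm Q) :=
  Subgroup.closure {g | ∃ h ∈ S.LMlt, ∃ x y, r x y ∧ g = h * (S.L x * (S.L y)⁻¹) * h⁻¹}

/-- The displacement group. -/
def Dis : Subgroup (Equiv.Perm Q) := S.disRel fun _ _ => True

/-- `Dis^α`. -/
def disUp (α : Setoid Q) : Subgroup (Equiv.Perm Q) := S.Dis ⊓ kerRel α

/-- `LMlt^α`, the kernel of `π_α`. -/
def lmltKer (α : Setoid Q) : Subgroup (Equiv.Perm Q) := S.LMlt ⊓ kerRel α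

/-- Congruences of a left quasigroup. -/
structure IsCongruence (α : Setoid Q) : Prop where
  op_compat : ∀ {x y z w : Q}, α.r x y → α.r z w → α.r (S.op x z) (S.op y w)
  ld_compat : ∀ {x y z w : Q}, α.r x y → α.r z w → α.r (S.ld x z) (S.ld y w)

theorem L_mem_lmlt (x : Q) : S.L x ∈ S.LMlt := Subgroup.subset_closure ⟨x, rfl⟩

theorem disRel_le_lmlt (r : Q → Q → Prop) : S.disRel r ≤ S.LMlt := by
  refine (Subgroup.closure_le _).2 ?_
  rintro g ⟨h, hh, x, y, _, rfl⟩
  exact mul_mem (mul_mem hh (mul_mem (S.L_mem_lmlt x) (inv_mem (S.L_mem_lmlt y)))) (inv_mem hh)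

theorem lmlt_maps {α : Setoid Q} (hα : S.IsCongruence α) {g : Equiv.Perm Q}
    (hg : g ∈ S.LMlt) : ∀ x y, α.r x y → α.r (g x) (g y) := by
  have H : ∀ g ∈ S.LMlt,
      (∀ x y, α.r x y → α.r (g x) (g y)) ∧ (∀ x y, α.r x y → α.r (g⁻¹ x) (g⁻¹ y)) := by
    intro g hg
    induction hg using Subgroup.closure_induction with
    | mem g hgen =>
      obtain ⟨z, rfl⟩ := hgen
      constructor
      · intro x y h; exact hα.op_compat (α.refl z) h
      · intro x y h; exact hα.ld_compat (α.refl z) h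
    | one =>
      constructor <;> intro x y h <;> simpa using h
    | mul a b _ _ ha hb =>
      constructor
      · intro x y h
        exact ha.1 _ _ (hb.1 _ _ h)
      · intro x y h
        have := hb.2 _ _ (ha.2 _ _ h)
        simpa [mul_inv_rev] using this
    | inv a _ ha =>
      refine ⟨ha.2, ?_⟩
      intro x y h
      simpa using ha.1 x y h
  exact (H g hg).1

/-- The blockwise stabilizer `Dis(Q)_{[x]_α}`. -/
def blockStab (α : Setoid Q) (hα : S.IsCongruence α) (x : Q) : Subgroup (Equiv.Perm Q) where
  carrier := {g | g ∈ S.Dis ∧ α.r (g x) x}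
  one_mem' := ⟨S.Dis.one_mem, α.refl x⟩
  mul_mem' := by
    intro a b ha hb
    refine ⟨S.Dis.mul_mem ha.1 hb.1, ?_⟩
    exact α.trans (S.lmlt_maps hα (S.disRel_le_lmlt _ ha.1) _ _ hb.2) ha.2
  inv_mem' := by
    intro a ha
    refine ⟨S.Dis.inv_mem ha.1, ?_⟩
    have h2 := S.lmlt_maps hα (inv_mem (S.disRel_le_lmlt _ ha.1)) _ _ ha.2
    rw [show a⁻¹ (a x) = x from a.symm_apply_apply x] at h2
    exact α.symm h2

/-- The admissible subgroups `Norm(Q)`. -/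
def Norm : Set (Subgroup (Equiv.Perm Q)) :=
  {N | N ≤ S.LMlt ∧ (∀ h ∈ S.LMlt, ∀ n ∈ N, h * n * h⁻¹ ∈ N) ∧ S.disRel (orbRel N) ≤ N}

/-- Image of a subgroup along the canonical projection `π_α`. -/
def piSub (α : Setoid Q) (N : Subgroup (Equiv.Perm Q)) : Subgroup (Equiv.Perm (Quotient α)) where
  carrier := {k | ∃ h ∈ N, ∀ x : Q, k (Quotient.mk α x) = Quotient.mk α (h x)}
  one_mem' := ⟨1, N.one_mem, fun _ => rfl⟩
  mul_mem' := by
    rintro a b ⟨ha, haN, hae⟩ ⟨hb, hbN, hbe⟩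
    refine ⟨ha * hb, N.mul_mem haN hbN, fun x => ?_⟩
    show a (b (Quotient.mk α x)) = _
    rw [hbe, hae]; rfl
  inv_mem' := by
    rintro a ⟨h, hN, he⟩
    refine ⟨h⁻¹, N.inv_mem hN, fun x => ?_⟩
    have h1 := he (h⁻¹ x)
    rw [show h (h⁻¹ x) = x from h.apply_symm_apply x] at h1
    rw [← h1]; exact Equiv.symm_apply_apply _ _

/-- Preimage of a subgroup along the canonical projection `π_α`. -/
def piPre (α : Setoid Q) (K : Subgroup (Equiv.Perm (Quotient α))) : Subgroup (Equiv.Perm Q) where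
  carrier := {h | h ∈ S.LMlt ∧ ∃ k ∈ K, ∀ x : Q, k (Quotient.mk α x) = Quotient.mk α (h x)}
  one_mem' := ⟨S.LMlt.one_mem, 1, K.one_mem, fun _ => rfl⟩
  mul_mem' := by
    rintro a b ⟨haL, ka, kaK, hae⟩ ⟨hbL, kb, kbK, hbe⟩
    refine ⟨S.LMlt.mul_mem haL hbL, ka * kb, K.mul_mem kaK kbK, fun x => ?_⟩
    show ka (kb (Quotient.mk α x)) = _
    rw [hbe, hae]; rfl
  inv_mem' := by
    rintro a ⟨haL, k, kK, he⟩
    refine ⟨S.LMlt.inv_mem haL, k⁻¹, K.inv_mem kK, fun x => ?_⟩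
    have h1 := he (a⁻¹ x)
    rw [show a (a⁻¹ x) = x from a.apply_symm_apply x] at h1
    rw [← h1]; exact Equiv.symm_apply_apply _ _

/-- Quotient left quasigroup. -/
def quotLQ (α : Setoid Q) (hα : S.IsCongruence α) : LeftQuasigroup (Quotient α) where
  op := Quotient.lift₂ (fun x y => Quotient.mk α (S.op x y))
    (fun _ _ _ _ h1 h2 => Quotient.sound (hα.op_compat h1 h2))
  ld := Quotient.lift₂ (fun x y => Quotient.mk α (S.ld x y))
    (fun _ _ _ _ h1 h2 => Quotient.sound (hα.ld_compat h1 h2))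
  op_ld := fun a b => Quotient.inductionOn₂ a b fun x y => congrArg (Quotient.mk α) (S.op_ld x y)
  ld_op := fun a b => Quotient.inductionOn₂ a b fun x y => congrArg (Quotient.mk α) (S.ld_op x y)

/-- Idempotent left quasigroup. -/
def Idem : Prop := ∀ x : Q, S.op x x = x

/-- Left distributive law (defining quandles among idempotent left quasigroups). -/
def Ldist : Prop := ∀ x y z : Q, S.op x (S.op y z) = S.op (S.op x y) (S.op x z)

/-- A left quasigroup is faithful if the Cayley kernel is trivial. -/
def Faithful : Prop := ∀ x y : Q, (∀ z, S.op x z = S.op y z) → x = y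

/-- Connected: `LMlt` acts transitively. -/
def Connected : Prop := ∀ x y : Q, ∃ h ∈ S.LMlt, h y = x

/-- Semiregular: `Dis` acts with trivial stabilizers. -/
def Semiregular : Prop := ∀ g ∈ S.Dis, ∀ x : Q, g x = x → g = 1

/-- Subalgebras. -/
def IsSubalgebra (A : Set Q) : Prop :=
  ∀ ⦃x⦄, x ∈ A → ∀ ⦃y⦄, y ∈ A → S.op x y ∈ A ∧ S.ld x y ∈ A

/-- The left quasigroup structure on a subalgebra. -/
def subLQ (A : Set Q) (hA : S.IsSubalgebra A) : LeftQuasigroup A where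
  op a b := ⟨S.op a b, (hA a.2 b.2).1⟩
  ld a b := ⟨S.ld a b, (hA a.2 b.2).2⟩
  op_ld a b := Subtype.ext (S.op_ld a b)
  ld_op a b := Subtype.ext (S.ld_op a b)

/-- Superconnected: every subalgebra is connected. -/
def Superconnected : Prop := ∀ (A : Set Q) (hA : S.IsSubalgebra A), (S.subLQ A hA).Connected

/-- Superfaithful: every subalgebra is faithful. -/
def Superfaithful : Prop := ∀ (A : Set Q) (hA : S.IsSubalgebra A), (S.subLQ A hA).Faithful

theorem infCong {I : Type*} {α : I → Setoid Q} (hc : ∀ i, S.IsCongruence (α i)) :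
    S.IsCongruence (infSetoid α) :=
  ⟨fun h1 h2 i => (hc i).op_compat (h1 i) (h2 i),
   fun h1 h2 i => (hc i).ld_compat (h1 i) (h2 i)⟩

end LeftQuasigroup

/-- Terms in the language of left quasigroups in `n` variables. -/
inductive LQTerm : ℕ → Type
  | var : ∀ {n}, Fin n → LQTerm n
  | op : ∀ {n}, LQTerm n → LQTerm n → LQTerm n
  | ld : ∀ {n}, LQTerm n → LQTerm n → LQTerm n

/-- Evaluation of terms. -/
def evalT {Q : Type*} (S : LeftQuasigroup Q) : ∀ {n}, LQTerm n → (Fin n → Q) → Q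
  | _, .var i, v => v i
  | _, .op t s, v => S.op (evalT S t v) (evalT S s v)
  | _, .ld t s, v => S.ld (evalT S t v) (evalT S s v)

/-- The centralizing relation `C(a, b; d)` of commutator theory. -/
def CC {Q : Type*} (S : LeftQuasigroup Q) (a b d : Q → Q → Prop) : Prop :=
  ∀ (n : ℕ) (t : LQTerm (n + 1)) (x y : Q) (z u : Fin n → Q),
    a x y → (∀ i, b (z i) (u i)) →
    d (evalT S t (Fin.cons x z)) (evalT S t (Fin.cons x u)) →
    d (evalT S t (Fin.cons y z)) (evalT S t (Fin.cons y u))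

/-- Nilpotency of length `n` in the sense of commutator theory: the ascending central
series (characterized congruence by congruence) reaches the full congruence at step `n`. -/
def LeftQuasigroup.NilpotentLength {Q : Type*} (S : LeftQuasigroup Q) (n : ℕ) : Prop :=
  ∃ c : ℕ → Setoid Q,
    (∀ k, S.IsCongruence (c k)) ∧
    (∀ x y : Q, (c 0).r x y ↔ x = y) ∧
    (∀ k, ∀ β : Setoid Q, S.IsCongruence β →
      (CC S β.r (fun _ _ => True) (c k).r ↔ β ≤ c (k + 1))) ∧
    (∀ x y : Q, (c n).r x y)


namespace Stmt17Aux

open LeftQuasigroup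

variable {Q : Type*}

/-- Substitution of terms for variables. -/
def bindT : ∀ {n m : ℕ}, LQTerm n → (Fin n → LQTerm m) → LQTerm m
  | _, _, .var i, σ => σ i
  | _, _, .op t s, σ => .op (bindT t σ) (bindT s σ)
  | _, _, .ld t s, σ => .ld (bindT t σ) (bindT s σ)

theorem evalT_bindT (S : LeftQuasigroup Q) :
    ∀ {n m : ℕ} (t : LQTerm n) (σ : Fin n → LQTerm m) (v : Fin m → Q),
    evalT S (bindT t σ) v = evalT S t (fun i => evalT S (σ i) v)
  | _, _, .var i, σ, v => by simp only [bindT, evalT]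
  | _, _, .op t s, σ, v => by
      simp only [bindT, evalT, evalT_bindT S t, evalT_bindT S s]
  | _, _, .ld t s, σ, v => by
      simp only [bindT, evalT, evalT_bindT S t, evalT_bindT S s]

theorem L_apply (S : LeftQuasigroup Q) (c z : Q) : S.L c z = S.op c z := rfl

theorem L_inv_apply (S : LeftQuasigroup Q) (c z : Q) : (S.L c)⁻¹ z = S.ld c z := rfl

/-- A permutation (and its inverse) representable by terms with parameters. -/
def Rep (S : LeftQuasigroup Q) (k : Equiv.Perm Q) : Prop :=
  ∃ (n : ℕ) (f fi : LQTerm (n + 1)) (v : Fin n → Q),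
    (∀ w, evalT S f (Fin.cons w v) = k w) ∧ (∀ w, evalT S fi (Fin.cons w v) = k⁻¹ w)

theorem rep_one (S : LeftQuasigroup Q) : Rep S 1 :=
  ⟨0, .var 0, .var 0, Fin.elim0, fun w => by simp [evalT], fun w => by simp [evalT]⟩

theorem rep_L (S : LeftQuasigroup Q) (c : Q) : Rep S (S.L c) := by
  refine ⟨1, .op (.var (Fin.succ 0)) (.var 0), .ld (.var (Fin.succ 0)) (.var 0),
    fun _ => c, fun w => ?_, fun w => ?_⟩
  · simp [evalT, L_apply]
  · simp [evalT, L_inv_apply]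

theorem rep_inv (S : LeftQuasigroup Q) {k : Equiv.Perm Q} (h : Rep S k) : Rep S k⁻¹ := by
  obtain ⟨n, f, fi, v, hf, hfi⟩ := h
  exact ⟨n, fi, f, v, hfi, by simpa using hf⟩

theorem rep_mul (S : LeftQuasigroup Q) {k₁ k₂ : Equiv.Perm Q}
    (h1 : Rep S k₁) (h2 : Rep S k₂) : Rep S (k₁ * k₂) := by
  obtain ⟨n₁, f₁, fi₁, v₁, hf₁, hfi₁⟩ := h1
  obtain ⟨n₂, f₂, fi₂, v₂, hf₂, hfi₂⟩ := h2
  refine ⟨n₁ + n₂,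
    bindT f₁ (Fin.cases
      (bindT f₂ (Fin.cases (.var 0) (fun j => .var (Fin.succ (Fin.natAdd n₁ j)))))
      (fun i => .var (Fin.succ (Fin.castAdd n₂ i)))),
    bindT fi₂ (Fin.cases
      (bindT fi₁ (Fin.cases (.var 0) (fun i => .var (Fin.succ (Fin.castAdd n₂ i)))))
      (fun j => .var (Fin.succ (Fin.natAdd n₁ j)))),
    Fin.append v₁ v₂, fun w => ?_, fun w => ?_⟩
  · rw [evalT_bindT]
    have inner : (fun j => evalT S
        ((Fin.cases (.var 0) (fun j => .var (Fin.succ (Fin.natAdd n₁ j))) :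
          Fin (n₂+1) → LQTerm (n₁ + n₂ + 1)) j) (Fin.cons w (Fin.append v₁ v₂)))
        = Fin.cons w v₂ := by
      funext j
      induction j using Fin.cases with
      | zero => simp [evalT]
      | succ j => simp [evalT]
    have outer : (fun i => evalT S
        ((Fin.cases
          (bindT f₂ (Fin.cases (.var 0) (fun j => .var (Fin.succ (Fin.natAdd n₁ j)))))
          (fun i => .var (Fin.succ (Fin.castAdd n₂ i))) :
          Fin (n₁+1) → LQTerm (n₁ + n₂ + 1)) i) (Fin.cons w (Fin.append v₁ v₂)))
        = Fin.cons (k₂ w) v₁ := by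
      funext i
      induction i using Fin.cases with
      | zero => simp [evalT_bindT, inner, hf₂]
      | succ i => simp [evalT]
    rw [outer, hf₁]
    rfl
  · rw [evalT_bindT]
    have inner : (fun i => evalT S
        ((Fin.cases (.var 0) (fun i => .var (Fin.succ (Fin.castAdd n₂ i))) :
          Fin (n₁+1) → LQTerm (n₁ + n₂ + 1)) i) (Fin.cons w (Fin.append v₁ v₂)))
        = Fin.cons w v₁ := by
      funext i
      induction i using Fin.cases with
      | zero => simp [evalT]
      | succ i => simp [evalT]
    have outer : (fun j => evalT S
        ((Fin.cases
          (bindT fi₁ (Fin.cases (.var 0) (fun i => .var (Fin.succ (Fin.castAdd n₂ i)))))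
          (fun j => .var (Fin.succ (Fin.natAdd n₁ j))) :
          Fin (n₂+1) → LQTerm (n₁ + n₂ + 1)) j) (Fin.cons w (Fin.append v₁ v₂)))
        = Fin.cons (k₁⁻¹ w) v₂ := by
      funext j
      induction j using Fin.cases with
      | zero => simp [evalT_bindT, inner, hfi₁]
      | succ j => simp [evalT]
    rw [outer, hfi₂]
    simp [mul_inv_rev]

theorem rep_lmlt (S : LeftQuasigroup Q) {h : Equiv.Perm Q} (hh : h ∈ S.LMlt) : Rep S h := by
  induction hh using Subgroup.closure_induction with
  | mem g hg => obtain ⟨c, rfl⟩ := hg; exact rep_L S c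
  | one => exact rep_one S
  | mul a b _ _ ha hb => exact rep_mul S ha hb
  | inv a _ ha => exact rep_inv S ha


/-- Parameter substitution for the inner occurrence `c * z`. -/
def sigFi (n : ℕ) : Fin (n+1) → LQTerm (n+4) :=
  Fin.cases (.op (.var (Fin.succ (0 : Fin (n+3)))) (.var (Fin.succ (Fin.succ (0 : Fin (n+2))))))
    (fun i => .var i.succ.succ.succ.succ)

def sigF (n : ℕ) (fi : LQTerm (n+1)) : Fin (n+1) → LQTerm (n+4) :=
  Fin.cases (.op (.var 0) (.ld (.var (Fin.succ (Fin.succ (Fin.succ (0 : Fin (n+1))))))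
      (bindT fi (sigFi n))))
    (fun i => .var i.succ.succ.succ.succ)

/-- The term `t(x; c, z, b, v) = c \ h(x * (b \ h⁻¹(c * z)))` where `h` is given by `f`/`fi`. -/
def keyTerm (n : ℕ) (f fi : LQTerm (n+1)) : LQTerm (n+3+1) :=
  .ld (.var (Fin.succ (0 : Fin (n+3)))) (bindT f (sigF n fi))

theorem eval_keyTerm (S : LeftQuasigroup Q) {n : ℕ} (f fi : LQTerm (n+1)) (v : Fin n → Q)
    {h : Equiv.Perm Q}
    (hf : ∀ w, evalT S f (Fin.cons w v) = h w) (hfi : ∀ w, evalT S fi (Fin.cons w v) = h⁻¹ w)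
    (x c z b : Q) :
    evalT S (keyTerm n f fi) (Fin.cons x (Fin.cons c (Fin.cons z (Fin.cons b v)))) =
      S.ld c (h (S.op x (S.ld b (h⁻¹ (S.op c z))))) := by
  have h1 : (fun j => evalT S (sigFi n j)
        (Fin.cons x (Fin.cons c (Fin.cons z (Fin.cons b v))))) = Fin.cons (S.op c z) v := by
    funext j
    induction j using Fin.cases with
    | zero => simp only [sigFi, Fin.cases_zero, evalT, Fin.cons_succ, Fin.cons_zero]
    | succ j => simp only [sigFi, Fin.cases_succ, evalT, Fin.cons_succ, Fin.cons_zero]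
  have h2 : (fun i => evalT S (sigF n fi i)
        (Fin.cons x (Fin.cons c (Fin.cons z (Fin.cons b v)))))
      = Fin.cons (S.op x (S.ld b (h⁻¹ (S.op c z)))) v := by
    funext i
    induction i using Fin.cases with
    | zero =>
      simp only [sigF, Fin.cases_zero, evalT, evalT_bindT, h1, hfi, Fin.cons_succ, Fin.cons_zero]
    | succ i => simp only [sigF, Fin.cases_succ, evalT, Fin.cons_succ, Fin.cons_zero]
  simp only [keyTerm, evalT]
  rw [evalT_bindT, h2, hf, Fin.cons_succ, Fin.cons_zero]

theorem keyA (S : LeftQuasigroup Q) (α : Setoid Q)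
    (hc : CC S α.r (fun _ _ => True) (fun x y => x = y))
    {a b : Q} (hab : α.r a b) {h : Equiv.Perm Q} (hh : h ∈ S.LMlt) (c c' z : Q) :
    S.ld c (h (S.op a (S.ld b (h⁻¹ (S.op c z))))) =
      S.ld c' (h (S.op a (S.ld b (h⁻¹ (S.op c' z))))) := by
  obtain ⟨n, f, fi, v, hf, hfi⟩ := rep_lmlt S hh
  have ev := eval_keyTerm S f fi v hf hfi
  have prem : evalT S (keyTerm n f fi) (Fin.cons b (Fin.cons c (Fin.cons z (Fin.cons b v)))) =
      evalT S (keyTerm n f fi) (Fin.cons b (Fin.cons c' (Fin.cons z (Fin.cons b v)))) := by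
    rw [ev, ev, S.op_ld, S.op_ld, (show ∀ y, h (h⁻¹ y) = y from h.apply_symm_apply),
      (show ∀ y, h (h⁻¹ y) = y from h.apply_symm_apply),
      S.ld_op, S.ld_op]
  have conc := hc (n+3) (keyTerm n f fi) b a (Fin.cons c (Fin.cons z (Fin.cons b v)))
    (Fin.cons c' (Fin.cons z (Fin.cons b v))) (α.symm hab) (fun _ => trivial) prem
  rw [ev, ev] at conc
  exact conc

theorem commute_conj {G : Type*} [Group G] {u v : G} (w : G) (h : Commute u v) :
    Commute (w * u * w⁻¹) (w * v * w⁻¹) := by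
  have h2 : w * (u * v) * w⁻¹ = w * (v * u) * w⁻¹ := by rw [h.eq]
  show (w * u * w⁻¹) * (w * v * w⁻¹) = (w * v * w⁻¹) * (w * u * w⁻¹)
  calc (w * u * w⁻¹) * (w * v * w⁻¹) = w * (u * v) * w⁻¹ := by group
  _ = w * (v * u) * w⁻¹ := h2
  _ = (w * v * w⁻¹) * (w * u * w⁻¹) := by group

theorem keyB (S : LeftQuasigroup Q) (α : Setoid Q)
    (hc : CC S α.r (fun _ _ => True) (fun x y => x = y))
    {a b : Q} (hab : α.r a b) {h : Equiv.Perm Q} (hh : h ∈ S.LMlt) (c c' : Q) :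
    Commute (h * (S.L a * (S.L b)⁻¹) * h⁻¹) (S.L c * (S.L c')⁻¹) := by
  set g := h * (S.L a * (S.L b)⁻¹) * h⁻¹ with hg
  have E : (S.L c)⁻¹ * g * S.L c = (S.L c')⁻¹ * g * S.L c' := by
    apply Equiv.ext
    intro z
    have hk := keyA S α hc hab hh c c' z
    simpa only [hg, Equiv.Perm.mul_apply, L_apply, L_inv_apply] using hk
  show g * (S.L c * (S.L c')⁻¹) = (S.L c * (S.L c')⁻¹) * g
  calc g * (S.L c * (S.L c')⁻¹) = S.L c * ((S.L c)⁻¹ * g * S.L c) * (S.L c')⁻¹ := by group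
  _ = S.L c * ((S.L c')⁻¹ * g * S.L c') * (S.L c')⁻¹ := by rw [E]
  _ = (S.L c * (S.L c')⁻¹) * g := by group

theorem central (S : LeftQuasigroup Q) (α : Setoid Q)
    (hc : CC S α.r (fun _ _ => True) (fun x y => x = y)) :
    ∀ g ∈ S.disRel α.r, ∀ d ∈ S.Dis, Commute g d := by
  intro g hg
  induction hg using Subgroup.closure_induction with
  | mem g hgen =>
    obtain ⟨k, hk, a, b, hab, rfl⟩ := hgen
    intro d hd
    induction hd using Subgroup.closure_induction with
    | mem d hdgen =>
      obtain ⟨h', hh', x, y, -, rfl⟩ := hdgen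
      have h1 : Commute ((h'⁻¹ * k) * (S.L a * (S.L b)⁻¹) * (h'⁻¹ * k)⁻¹)
          (S.L x * (S.L y)⁻¹) := keyB S α hc hab (mul_mem (inv_mem hh') hk) x y
      have h2 := commute_conj h' h1
      have e1 : h' * ((h'⁻¹ * k) * (S.L a * (S.L b)⁻¹) * (h'⁻¹ * k)⁻¹) * h'⁻¹
          = k * (S.L a * (S.L b)⁻¹) * k⁻¹ := by group
      rw [e1] at h2
      exact h2
    | one => exact Commute.one_right _
    | mul d₁ d₂ _ _ hd₁ hd₂ => exact hd₁.mul_right hd₂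
    | inv d _ hd => exact hd.inv_right
  | one => intro d _; exact Commute.one_left d
  | mul g₁ g₂ _ _ hg₁ hg₂ => intro d hd; exact (hg₁ d hd).mul_left (hg₂ d hd)
  | inv g _ hg => intro d hd; exact (hg d hd).inv_left

end Stmt17Aux


/-- for `Q` connected by `Dis(Q)`, `α` central, `β = O_{Dis_α}`:
`Dis(Q)_{[x]_β} ≅ Dis_α × Dis(Q)_x`, `Dis^β ≅ Dis_α × Dis^β_x`, and `Dis^β` embeds in a
direct power of `Dis_α`, hence is abelian. -/
theorem stmt17 {Q : Type*} (S : LeftQuasigroup Q) (α : Setoid Q) (hα : S.IsCongruence α)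
    (hconn : ∀ x y : Q, ∃ h ∈ S.Dis, h y = x)
    (hc : CC S α.r (fun _ _ => True) (fun x y => x = y))
    (hβ : S.IsCongruence (orbSetoid (S.disRel α.r))) :
    (∀ x : Q, Nonempty
      (↥(S.blockStab (orbSetoid (S.disRel α.r)) hβ x) ≃*
        ↥(S.disRel α.r) × ↥(pstab S.Dis x))) ∧
    (∀ x : Q, Nonempty
      (↥(S.disUp (orbSetoid (S.disRel α.r))) ≃*
        ↥(S.disRel α.r) × ↥(pstab (S.disUp (orbSetoid (S.disRel α.r))) x))) ∧
    (∃ f : ↥(S.disUp (orbSetoid (S.disRel α.r))) →*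
        (Quotient (orbSetoid (S.disRel α.r)) → ↥(S.disRel α.r)),
      Function.Injective f) ∧
    (∀ g ∈ S.disUp (orbSetoid (S.disRel α.r)), ∀ h ∈ S.disUp (orbSetoid (S.disRel α.r)),
      g * h = h * g) := by
  classical
  set β := orbSetoid (S.disRel α.r) with hβd
  have hsub : S.disRel α.r ≤ S.Dis := by
    apply Subgroup.closure_mono
    rintro g ⟨h, hh, x, y, hxy, rfl⟩
    exact ⟨h, hh, x, y, trivial, rfl⟩
  have hcent : ∀ g ∈ S.disRel α.r, ∀ d ∈ S.Dis, Commute g d := Stmt17Aux.central S α hc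
  have hsemi : ∀ g ∈ S.disRel α.r, ∀ x : Q, g x = x → g = 1 := by
    intro g hg x hx
    apply Equiv.ext
    intro y
    obtain ⟨d, hd, rfl⟩ := hconn y x
    have h2 : (g * d) x = (d * g) x := by rw [(hcent g hg d hd).eq]
    simpa [Equiv.Perm.mul_apply, hx] using h2
  have huniq : ∀ g₁ ∈ S.disRel α.r, ∀ g₂ ∈ S.disRel α.r, ∀ y : Q,
      g₁ y = g₂ y → g₁ = g₂ := by
    intro g₁ h1 g₂ h2 y hy
    have h3 : g₂⁻¹ * g₁ = 1 := by
      refine hsemi _ (mul_mem (inv_mem h2) h1) y ?_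
      simp [Equiv.Perm.mul_apply, hy]
    exact (inv_mul_eq_one.mp h3).symm
  have hup : ∀ g ∈ S.disRel α.r, g ∈ S.disUp β := fun g hg =>
    Subgroup.mem_inf.mpr ⟨hsub hg, fun y => ⟨g, hg, rfl⟩⟩
  have hagree : ∀ g ∈ S.Dis, ∀ k ∈ S.disRel α.r, ∀ y : Q, k y = g y →
      ∀ z : Q, β.r z y → k z = g z := by
    intro g hg k hk y hky z hzy
    obtain ⟨m, hm, rfl⟩ := hzy
    have c1 := (hcent m hm g hg).eq
    have c2 := (hcent m hm k (hsub hk)).eq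
    calc k (m y) = (k * m) y := rfl
    _ = (m * k) y := by rw [← c2]
    _ = m (k y) := rfl
    _ = m (g y) := by rw [hky]
    _ = (m * g) y := rfl
    _ = (g * m) y := by rw [c1]
    _ = g (m y) := rfl
  have habel : ∀ g ∈ S.disUp β, ∀ h ∈ S.disUp β, g * h = h * g := by
    intro g hg h hh
    have hgD : g ∈ S.Dis := (Subgroup.mem_inf.mp hg).1
    have hhD : h ∈ S.Dis := (Subgroup.mem_inf.mp hh).1
    have hgK : ∀ y : Q, β.r (g y) y := (Subgroup.mem_inf.mp hg).2
    have hhK : ∀ y : Q, β.r (h y) y := (Subgroup.mem_inf.mp hh).2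
    apply Equiv.ext
    intro y
    obtain ⟨k, hk, hky⟩ := hgK y
    have h1 : k (h y) = g (h y) := hagree g hgD k hk y hky (h y) (hhK y)
    have c := (hcent k hk h hhD).eq
    calc (g * h) y = g (h y) := rfl
    _ = k (h y) := h1.symm
    _ = (k * h) y := rfl
    _ = (h * k) y := by rw [c]
    _ = h (k y) := rfl
    _ = h (g y) := by rw [hky]
    _ = (h * g) y := rfl
  have part3 : ∃ f : ↥(S.disUp β) →* (Quotient β → ↥(S.disRel α.r)),
      Function.Injective f := by
    have hexi : ∀ (g : ↥(S.disUp β)) (y : Q),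
        ∃ k : ↥(S.disRel α.r), (k : Equiv.Perm Q) y = (g : Equiv.Perm Q) y := by
      intro g y
      obtain ⟨k, hk, hky⟩ := (Subgroup.mem_inf.mp g.2).2 y
      exact ⟨⟨k, hk⟩, hky⟩
    choose F hF using hexi
    have hFblock : ∀ (g : ↥(S.disUp β)) (y z : Q), β.r z y →
        (F g y : Equiv.Perm Q) z = (g : Equiv.Perm Q) z := by
      intro g y z hzy
      exact hagree _ (Subgroup.mem_inf.mp g.2).1 _ (F g y).2 y (hF g y) z hzy
    have hFwd : ∀ (g : ↥(S.disUp β)) (y z : Q), β.r y z → F g y = F g z := by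
      intro g y z hyz
      apply Subtype.ext
      refine huniq _ (F g y).2 _ (F g z).2 y ?_
      rw [hF g y]
      exact (hFblock g z y hyz).symm
    refine ⟨MonoidHom.mk'
      (fun g => fun q => Quotient.liftOn q (F g) (fun y z h => hFwd g y z h)) ?_, ?_⟩
    · intro g h
      funext q
      induction q using Quotient.ind
      rename_i y
      show F (g * h) y = F g y * F h y
      apply Subtype.ext
      refine huniq _ (F (g * h) y).2 _ (mul_mem (F g y).2 (F h y).2) y ?_
      rw [hF (g * h) y]
      have e1 : ((F g y * F h y : ↥(S.disRel α.r)) : Equiv.Perm Q) y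
          = (F g y : Equiv.Perm Q) ((F h y : Equiv.Perm Q) y) := rfl
      rw [e1, hF h y]
      have e2 := hFblock g y ((h : Equiv.Perm Q) y) ((Subgroup.mem_inf.mp h.2).2 y)
      rw [e2]
      rfl
    · intro g g' hgg
      apply Subtype.ext
      apply Equiv.ext
      intro y
      have h1 : F g y = F g' y := congrFun hgg (Quotient.mk β y)
      calc (g : Equiv.Perm Q) y = (F g y : Equiv.Perm Q) y := (hF g y).symm
      _ = (F g' y : Equiv.Perm Q) y := by rw [h1]
      _ = (g' : Equiv.Perm Q) y := hF g' y
  have part1 : ∀ x : Q, Nonempty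
      (↥(S.blockStab β hβ x) ≃* ↥(S.disRel α.r) × ↥(pstab S.Dis x)) := by
    intro x
    have hmem : ∀ (p : ↥(S.disRel α.r) × ↥(pstab S.Dis x)),
        (p.1 : Equiv.Perm Q) * (p.2 : Equiv.Perm Q) ∈ S.blockStab β hβ x := by
      intro p
      have hfix : (p.2 : Equiv.Perm Q) x = x := by
        have := (Subgroup.mem_inf.mp p.2.2).2
        rwa [MulAction.mem_stabilizer_iff, Equiv.Perm.smul_def] at this
      refine ⟨mul_mem (hsub p.1.2) (Subgroup.mem_inf.mp p.2.2).1, ?_⟩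
      exact ⟨p.1, p.1.2, by simp [Equiv.Perm.mul_apply, hfix]⟩
    let φ : ↥(S.disRel α.r) × ↥(pstab S.Dis x) →* ↥(S.blockStab β hβ x) :=
      MonoidHom.mk' (fun p => ⟨(p.1 : Equiv.Perm Q) * (p.2 : Equiv.Perm Q), hmem p⟩) (by
        rintro ⟨g₁, d₁⟩ ⟨g₂, d₂⟩
        apply Subtype.ext
        have c := (hcent (g₂ : Equiv.Perm Q) g₂.2 (d₁ : Equiv.Perm Q)
          (Subgroup.mem_inf.mp d₁.2).1).eq
        show ((g₁ : Equiv.Perm Q) * g₂) * ((d₁ : Equiv.Perm Q) * d₂)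
            = ((g₁ : Equiv.Perm Q) * d₁) * ((g₂ : Equiv.Perm Q) * d₂)
        rw [mul_assoc, ← mul_assoc (g₂ : Equiv.Perm Q), c, mul_assoc, ← mul_assoc])
    have hbij : Function.Bijective φ := by
      constructor
      · rintro ⟨g₁, d₁⟩ ⟨g₂, d₂⟩ hpq
        have he : (g₁ : Equiv.Perm Q) * d₁ = (g₂ : Equiv.Perm Q) * d₂ :=
          congrArg Subtype.val hpq
        have hd₁x : (d₁ : Equiv.Perm Q) x = x := by
          have := (Subgroup.mem_inf.mp d₁.2).2
          rwa [MulAction.mem_stabilizer_iff, Equiv.Perm.smul_def] at this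
        have hd₂x : (d₂ : Equiv.Perm Q) x = x := by
          have := (Subgroup.mem_inf.mp d₂.2).2
          rwa [MulAction.mem_stabilizer_iff, Equiv.Perm.smul_def] at this
        have e1 : (g₁ : Equiv.Perm Q) x = (g₂ : Equiv.Perm Q) x := by
          have h0 := Equiv.ext_iff.mp he x
          simpa [Equiv.Perm.mul_apply, hd₁x, hd₂x] using h0
        have hgg : (g₁ : Equiv.Perm Q) = g₂ := huniq _ g₁.2 _ g₂.2 x e1
        have hdd : (d₁ : Equiv.Perm Q) = d₂ := by
          have h5 := he
          rw [hgg] at h5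
          exact mul_left_cancel h5
        simp only [Prod.mk.injEq]
        exact ⟨Subtype.ext hgg, Subtype.ext hdd⟩
      · rintro ⟨f, hfD, hfβ⟩
        obtain ⟨g, hg, hgx⟩ := hfβ
        refine ⟨(⟨g, hg⟩, ⟨g⁻¹ * f,
          Subgroup.mem_inf.mpr ⟨mul_mem (inv_mem (hsub hg)) hfD, ?_⟩⟩), ?_⟩
        · rw [MulAction.mem_stabilizer_iff, Equiv.Perm.smul_def]
          simp [Equiv.Perm.mul_apply, ← hgx]
        · exact Subtype.ext (mul_inv_cancel_left g f)
    exact ⟨(MulEquiv.ofBijective φ hbij).symm⟩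
  have part2 : ∀ x : Q, Nonempty
      (↥(S.disUp β) ≃* ↥(S.disRel α.r) × ↥(pstab (S.disUp β) x)) := by
    intro x
    have hmem : ∀ (p : ↥(S.disRel α.r) × ↥(pstab (S.disUp β) x)),
        (p.1 : Equiv.Perm Q) * (p.2 : Equiv.Perm Q) ∈ S.disUp β :=
      fun p => mul_mem (hup _ p.1.2) (Subgroup.mem_inf.mp p.2.2).1
    let φ : ↥(S.disRel α.r) × ↥(pstab (S.disUp β) x) →* ↥(S.disUp β) :=
      MonoidHom.mk' (fun p => ⟨(p.1 : Equiv.Perm Q) * (p.2 : Equiv.Perm Q), hmem p⟩) (by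
        rintro ⟨g₁, d₁⟩ ⟨g₂, d₂⟩
        apply Subtype.ext
        have hd₁D : (d₁ : Equiv.Perm Q) ∈ S.Dis :=
          (Subgroup.mem_inf.mp (Subgroup.mem_inf.mp d₁.2).1).1
        have c := (hcent (g₂ : Equiv.Perm Q) g₂.2 (d₁ : Equiv.Perm Q) hd₁D).eq
        show ((g₁ : Equiv.Perm Q) * g₂) * ((d₁ : Equiv.Perm Q) * d₂)
            = ((g₁ : Equiv.Perm Q) * d₁) * ((g₂ : Equiv.Perm Q) * d₂)
        rw [mul_assoc, ← mul_assoc (g₂ : Equiv.Perm Q), c, mul_assoc, ← mul_assoc])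
    have hbij : Function.Bijective φ := by
      constructor
      · rintro ⟨g₁, d₁⟩ ⟨g₂, d₂⟩ hpq
        have he : (g₁ : Equiv.Perm Q) * d₁ = (g₂ : Equiv.Perm Q) * d₂ :=
          congrArg Subtype.val hpq
        have hd₁x : (d₁ : Equiv.Perm Q) x = x := by
          have := (Subgroup.mem_inf.mp d₁.2).2
          rwa [MulAction.mem_stabilizer_iff, Equiv.Perm.smul_def] at this
        have hd₂x : (d₂ : Equiv.Perm Q) x = x := by
          have := (Subgroup.mem_inf.mp d₂.2).2
          rwa [MulAction.mem_stabilizer_iff, Equiv.Perm.smul_def] at this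
        have e1 : (g₁ : Equiv.Perm Q) x = (g₂ : Equiv.Perm Q) x := by
          have h0 := Equiv.ext_iff.mp he x
          simpa [Equiv.Perm.mul_apply, hd₁x, hd₂x] using h0
        have hgg : (g₁ : Equiv.Perm Q) = g₂ := huniq _ g₁.2 _ g₂.2 x e1
        have hdd : (d₁ : Equiv.Perm Q) = d₂ := by
          have h5 := he
          rw [hgg] at h5
          exact mul_left_cancel h5
        simp only [Prod.mk.injEq]
        exact ⟨Subtype.ext hgg, Subtype.ext hdd⟩
      · rintro ⟨f, hf⟩
        obtain ⟨g, hg, hgx⟩ := (Subgroup.mem_inf.mp hf).2 x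
        refine ⟨(⟨g, hg⟩, ⟨g⁻¹ * f,
          Subgroup.mem_inf.mpr ⟨mul_mem (inv_mem (hup g hg)) hf, ?_⟩⟩), ?_⟩
        · rw [MulAction.mem_stabilizer_iff, Equiv.Perm.smul_def]
          simp [Equiv.Perm.mul_apply, ← hgx]
        · exact Subtype.ext (mul_inv_cancel_left g f)
    exact ⟨(MulEquiv.ofBijective φ hbij).symm⟩
  exact ⟨part1, part2, part3, habel⟩
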